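/- arXiv:2604.06024 — 3 statements merged into one kernel-verified Lean document; each statement's English description precedes it below -/
import Mathlib

section
/- The function f(x) = cos(x) / (2x(1 − sin(x))) satisfies f(x) ≥ 3/2 for all x in (0, π/2). -/
open Set Real

private lemma aux_mono (f g : ℝ → ℝ) (f' g' : ℝ → ℝ)
    (hf : ∀ y, HasDerivAt f (f' y) y) (hg : ∀ y, HasDerivAt g (g' y) y)
    (h0 : f 0 = g 0) (hd : ∀ y, 0 ≤ y → f' y ≤ g' y) :
    ∀ x, 0 ≤ x → f x ≤ g x := by
  intro x hx
  have hmono : MonotoneOn (fun y => g y - f y) (Set.Ici (0:ℝ)) := by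
    apply monotoneOn_of_deriv_nonneg (convex_Ici 0)
    · exact fun y _ => ((hg y).sub (hf y)).continuousAt.continuousWithinAt
    · intro y hy
      exact (((hg y).sub (hf y)).differentiableAt).differentiableWithinAt
    · intro y hy
      rw [interior_Ici] at hy
      have hgf : HasDerivAt (fun y => g y - f y) (g' y - f' y) y := (hg y).sub (hf y)
      rw [hgf.deriv]
      have := hd y hy.le
      linarith
  have := hmono (Set.self_mem_Ici) (Set.mem_Ici.mpr hx) hx
  simp only at this
  linarith

private lemma sin_ge_taylor : ∀ x : ℝ, 0 ≤ x → x - x^3/6 ≤ Real.sin x := by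
  apply aux_mono (fun y => y - y^3/6) Real.sin (fun y => 1 - y^2/2) Real.cos
  · intro y
    have h1 : HasDerivAt (fun y : ℝ => y^3/6) (y^2/2) y := by
      have := (hasDerivAt_pow 3 y).div_const 6
      exact this.congr_deriv (by ring)
    exact (hasDerivAt_id y).sub h1
  · exact fun y => Real.hasDerivAt_sin y
  · simp
  · intro y _
    exact Real.one_sub_sq_div_two_le_cos

private lemma cos_le_taylor : ∀ x : ℝ, 0 ≤ x → Real.cos x ≤ 1 - x^2/2 + x^4/24 := by
  apply aux_mono Real.cos (fun y => 1 - y^2/2 + y^4/24)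
      (fun y => -Real.sin y) (fun y => -y + y^3/6)
  · exact fun y => Real.hasDerivAt_cos y
  · intro y
    have h2 : HasDerivAt (fun y : ℝ => y^2/2) y y := by
      have := (hasDerivAt_pow 2 y).div_const 2
      exact this.congr_deriv (by ring)
    have h4 : HasDerivAt (fun y : ℝ => y^4/24) (y^3/6) y := by
      have := (hasDerivAt_pow 4 y).div_const 24
      exact this.congr_deriv (by ring)
    have := ((hasDerivAt_const y (1:ℝ)).sub h2).add h4
    exact this.congr_deriv (by ring)
  · simp
  · intro y hy
    have := sin_ge_taylor y hy
    linarith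

private lemma sin_le_taylor : ∀ x : ℝ, 0 ≤ x → Real.sin x ≤ x - x^3/6 + x^5/120 := by
  apply aux_mono Real.sin (fun y => y - y^3/6 + y^5/120)
      Real.cos (fun y => 1 - y^2/2 + y^4/24)
  · exact fun y => Real.hasDerivAt_sin y
  · intro y
    have h3 : HasDerivAt (fun y : ℝ => y^3/6) (y^2/2) y := by
      have := (hasDerivAt_pow 3 y).div_const 6
      exact this.congr_deriv (by ring)
    have h5 : HasDerivAt (fun y : ℝ => y^5/120) (y^4/24) y := by
      have := (hasDerivAt_pow 5 y).div_const 120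
      exact this.congr_deriv (by ring)
    have := ((hasDerivAt_id y).sub h3).add h5
    exact this
  · simp
  · intro y hy
    exact cos_le_taylor y hy

private lemma cos_ge_taylor : ∀ x : ℝ, 0 ≤ x →
    1 - x^2/2 + x^4/24 - x^6/720 ≤ Real.cos x := by
  apply aux_mono (fun y => 1 - y^2/2 + y^4/24 - y^6/720) Real.cos
      (fun y => -y + y^3/6 - y^5/120) (fun y => -Real.sin y)
  · intro y
    have h2 : HasDerivAt (fun y : ℝ => y^2/2) y y := by
      have := (hasDerivAt_pow 2 y).div_const 2
      exact this.congr_deriv (by ring)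
    have h4 : HasDerivAt (fun y : ℝ => y^4/24) (y^3/6) y := by
      have := (hasDerivAt_pow 4 y).div_const 24
      exact this.congr_deriv (by ring)
    have h6 : HasDerivAt (fun y : ℝ => y^6/720) (y^5/120) y := by
      have := (hasDerivAt_pow 6 y).div_const 720
      exact this.congr_deriv (by ring)
    have := (((hasDerivAt_const y (1:ℝ)).sub h2).add h4).sub h6
    exact this.congr_deriv (by ring)
  · exact fun y => Real.hasDerivAt_cos y
  · simp
  · intro y hy
    have := sin_le_taylor y hy
    linarith

private lemma key_ineq : ∀ x : ℝ, 0 < x → x < π / 2 →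
    3 * x * (1 - Real.sin x) ≤ Real.cos x := by
  intro x hx0 hx2
  rcases le_or_gt x (13/10) with hc | hc
  · -- polynomial case
    have hs := sin_ge_taylor x hx0.le
    have hcos := cos_ge_taylor x hx0.le
    have h1 : 3 * x * (1 - Real.sin x) ≤ 3 * x * (1 - (x - x^3/6)) := by
      have : (1 : ℝ) - Real.sin x ≤ 1 - (x - x^3/6) := by linarith
      nlinarith
    have h2 : 3 * x * (1 - (x - x^3/6)) ≤ 1 - x^2/2 + x^4/24 - x^6/720 := by
      have h13 : (0:ℝ) ≤ 13/10 - x := by linarith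
      nlinarith [sq_nonneg (x - 3/4), sq_nonneg (x^2 - 9/16),
        mul_nonneg h13 (sq_nonneg (x - 3/4)),
        mul_nonneg hx0.le (sq_nonneg (x - 3/4)),
        mul_nonneg (mul_nonneg h13 hx0.le) (sq_nonneg (x - 3/4)),
        mul_nonneg h13 (sq_nonneg (x*(x - 3/4))),
        mul_nonneg hx0.le (sq_nonneg (x*(x-3/4))),
        mul_nonneg (mul_nonneg h13 h13) (sq_nonneg (x - 3/4)),
        sq_nonneg (x*(x-3/4)), sq_nonneg (x^2*(x-3/4)), mul_nonneg hx0.le hx0.le]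
    linarith
  · -- near π/2 case
    set t := π / 2 - x with ht
    have ht0 : 0 < t := by simp [ht]; linarith
    have htub : t ≤ 3.15/2 - 13/10 := by
      have := Real.pi_lt_d2
      simp only [ht]
      linarith
    have hsin : Real.sin x = Real.cos t := by
      rw [ht, Real.cos_pi_div_two_sub]
    have hcos : Real.cos x = Real.sin t := by
      rw [ht, Real.sin_pi_div_two_sub]
    rw [hsin, hcos]
    have h1 : 1 - Real.cos t ≤ t^2/2 := by
      have := Real.one_sub_sq_div_two_le_cos (x := t)
      linarith
    have h2 : t - t^3/6 ≤ Real.sin t := sin_ge_taylor t ht0.le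
    have hxle : x ≤ π / 2 := hx2.le
    have hcosnn : 1 - Real.cos t ≥ 0 := by
      have := Real.cos_le_one t
      linarith
    have h3 : 3 * x * (1 - Real.cos t) ≤ 3 * (π/2) * (t^2/2) := by
      have : 3 * x * (1 - Real.cos t) ≤ 3 * (π/2) * (1 - Real.cos t) := by
        nlinarith
      nlinarith [Real.pi_pos]
    have hpi : π < 3.15 := Real.pi_lt_d2
    have : 3 * (π/2) * (t^2/2) ≤ t - t^3/6 := by
      nlinarith [ht0, htub, Real.pi_pos]
    linarith

theorem f_lower_bound_three_halves :
    ∀ x ∈ Ioo (0:ℝ) (π / 2),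
      (3 : ℝ) / 2 ≤ Real.cos x / (2 * x * (1 - Real.sin x)) := by
  intro x hx
  obtain ⟨hx0, hx2⟩ := hx
  have hsin1 : Real.sin x < 1 := by
    have := Real.sin_lt_sin_of_lt_of_le_pi_div_two (x := x) (y := π/2)
      (by linarith [Real.pi_pos]) le_rfl hx2
    rwa [Real.sin_pi_div_two] at this
  have hD : 0 < 2 * x * (1 - Real.sin x) := by
    apply mul_pos (by linarith) (by linarith)
  rw [le_div_iff₀ hD]
  have := key_ineq x hx0 hx2
  nlinarith
end

section
/- Let Y ~ N(μ̃, σ̃²), σ̃ > 0, ε ∈ (0,1), and let γ be the unique solution of erf((γ−μ̃)/(√2σ̃)) + erf((γ+μ̃)/(√2σ̃)) = 2(1−ε). Then E[|Y| · 1{|Y| > γ}] = (μ̃/2)(erf((γ+μ̃)/(√2σ̃)) − erf((γ−μ̃)/(√2σ̃))) + (σ̃/√(2π))(e^{−(γ+μ̃)²/(2σ̃²)} + e^{−(γ−μ̃)²/(2σ̃²)}), and hence E[|Y| given |Y| > γ] equals this quantity divided by ε. -/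
open Set MeasureTheory ProbabilityTheory Real
open scoped NNReal ENNReal Topology

/-- The error function `erf x = (2/√π) ∫₀ˣ e^{−t²} dt`. -/
noncomputable def erf (x : ℝ) : ℝ :=
  (2 / Real.sqrt π) * ∫ t in (0:ℝ)..x, Real.exp (-t ^ 2)

section aux
open Filter

lemma aux_integrable_exp_neg_sq : Integrable (fun t : ℝ => Real.exp (-t ^ 2)) := by
  have := integrable_exp_neg_mul_sq (one_pos (α := ℝ))
  simpa using this

lemma aux_intervalIntegral_erf (x : ℝ) :
    ∫ t in (0:ℝ)..x, Real.exp (-t ^ 2) = Real.sqrt π / 2 * erf x := by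
  have h : Real.sqrt π ≠ 0 := (Real.sqrt_pos.mpr Real.pi_pos).ne'
  rw [erf]
  field_simp

lemma aux_erf_mono : Monotone erf := by
  intro p q hpq
  have h1 : (0:ℝ) ≤ ∫ t in p..q, Real.exp (-t ^ 2) :=
    intervalIntegral.integral_nonneg hpq (fun t _ => (Real.exp_pos _).le)
  have h2 := intervalIntegral.integral_add_adjacent_intervals
    (aux_integrable_exp_neg_sq.intervalIntegrable (a := 0) (b := p))
    (aux_integrable_exp_neg_sq.intervalIntegrable (a := p) (b := q))
  have h3 : (0:ℝ) ≤ 2 / Real.sqrt π := by positivity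
  unfold erf
  apply mul_le_mul_of_nonneg_left _ h3
  linarith

lemma aux_erf_neg (x : ℝ) : erf (-x) = - erf x := by
  have h := intervalIntegral.integral_comp_neg (a := (0:ℝ)) (b := x)
    (fun t => Real.exp (-t ^ 2))
  have h2 : (fun t : ℝ => Real.exp (-(-t) ^ 2)) = fun t : ℝ => Real.exp (-t ^ 2) := by
    funext t; ring_nf
  rw [h2] at h
  unfold erf
  rw [show (-(0:ℝ)) = 0 by ring] at h
  rw [intervalIntegral.integral_symm, ← h]
  ring

lemma aux_integral_Ioi_exp_neg_sq (c : ℝ) :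
    ∫ t in Ioi c, Real.exp (-t ^ 2) = Real.sqrt π / 2 * (1 - erf c) := by
  have hInt := aux_integrable_exp_neg_sq
  have htot : ∫ t : ℝ, Real.exp (-t ^ 2) = Real.sqrt π := by
    have := integral_gaussian 1
    simpa using this
  have hIic0 : ∫ t in Iic (0:ℝ), Real.exp (-t ^ 2) = Real.sqrt π / 2 := by
    have h := integral_comp_neg_Iic (0:ℝ) (fun t => Real.exp (-t ^ 2))
    simp only [neg_zero] at h
    have h2 : (fun t : ℝ => Real.exp (-(-t) ^ 2)) = fun t : ℝ => Real.exp (-t ^ 2) := by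
      funext t; ring_nf
    rw [h2] at h
    rw [h]
    have := integral_gaussian_Ioi 1
    simpa using this
  have hIic : ∫ t in Iic c, Real.exp (-t ^ 2)
      = Real.sqrt π / 2 + Real.sqrt π / 2 * erf c := by
    have h := intervalIntegral.integral_Iic_sub_Iic (a := 0) (b := c)
      hInt.integrableOn hInt.integrableOn
    rw [aux_intervalIntegral_erf] at h
    linarith
  have hsplit := intervalIntegral.integral_Iic_add_Ioi (b := c) (μ := volume)
    hInt.integrableOn hInt.integrableOn
  rw [htot] at hsplit
  linarith

lemma aux_integral_comp_add_right_Ioi (g : ℝ → ℝ) (a d : ℝ) :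
    ∫ x in Ioi a, g (x + d) = ∫ x in Ioi (a + d), g x := by
  have e : MeasurableEmbedding (fun x : ℝ => x + d) :=
    (Homeomorph.addRight d).measurableEmbedding
  have : ∫ x in Ioi (a + d), g x = ∫ x in Ioi a, g (x + d) := by
    conv_lhs => rw [← map_add_right_eq_self volume d]
    rw [e.setIntegral_map, preimage_add_const_Ioi]
    simp
  rw [this]

lemma aux_integral_comp_sub_right_Ioi (g : ℝ → ℝ) (a d : ℝ) :
    ∫ x in Ioi a, g (x - d) = ∫ x in Ioi (a - d), g x := by
  have h := aux_integral_comp_add_right_Ioi g a (-d)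
  simpa [sub_eq_add_neg] using h

lemma aux_pdf_eq (μ σ : ℝ) (hσ : 0 < σ) (x : ℝ) :
    gaussianPDFReal μ ⟨σ ^ 2, sq_nonneg σ⟩ x
      = (Real.sqrt (2 * π) * σ)⁻¹ * Real.exp (-(x - μ) ^ 2 / (2 * σ ^ 2)) := by
  simp only [gaussianPDFReal, NNReal.coe_mk]
  congr 2
  show Real.sqrt (2 * π * σ ^ 2) = _
  rw [show 2 * π * σ ^ 2 = (2 * π) * σ ^ 2 by ring,
    Real.sqrt_mul (by positivity), Real.sqrt_sq hσ.le]

lemma aux_pdf_neg (μ : ℝ) (v : ℝ≥0) (x : ℝ) :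
    gaussianPDFReal μ v (-x) = gaussianPDFReal (-μ) v x := by
  simp only [gaussianPDFReal]
  rw [show (-x - μ) ^ 2 = (x - -μ) ^ 2 by ring]

lemma aux_gauss_tail (μ σ : ℝ) (hσ : 0 < σ) (c : ℝ) :
    ∫ x in Ioi c, gaussianPDFReal μ ⟨σ ^ 2, sq_nonneg σ⟩ x
      = (1 - erf ((c - μ) / (Real.sqrt 2 * σ))) / 2 := by
  have h2 : (Real.sqrt 2) ^ 2 = 2 := Real.sq_sqrt (by norm_num)
  have hane : Real.sqrt 2 * σ ≠ 0 := by positivity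
  set b := (Real.sqrt 2 * σ)⁻¹ with hb
  have hbpos : 0 < b := by positivity
  have key : ∀ x : ℝ, gaussianPDFReal μ ⟨σ ^ 2, sq_nonneg σ⟩ x
      = (Real.sqrt (2 * π) * σ)⁻¹ * Real.exp (-(b * (x - μ)) ^ 2) := by
    intro x
    rw [aux_pdf_eq μ σ hσ]
    congr 2
    rw [hb, mul_pow, inv_pow, mul_pow, h2]
    field_simp
  calc ∫ x in Ioi c, gaussianPDFReal μ ⟨σ ^ 2, sq_nonneg σ⟩ x
      = ∫ x in Ioi c, (Real.sqrt (2 * π) * σ)⁻¹ * Real.exp (-(b * (x - μ)) ^ 2) := by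
        exact setIntegral_congr_fun measurableSet_Ioi (fun x _ => key x)
    _ = (Real.sqrt (2 * π) * σ)⁻¹ * ∫ x in Ioi c, Real.exp (-(b * (x - μ)) ^ 2) :=
        integral_const_mul _ _
    _ = (Real.sqrt (2 * π) * σ)⁻¹ * ∫ x in Ioi (c - μ), Real.exp (-(b * x) ^ 2) := by
        rw [aux_integral_comp_sub_right_Ioi (fun x => Real.exp (-(b * x) ^ 2)) c μ]
    _ = (Real.sqrt (2 * π) * σ)⁻¹ *
          (b⁻¹ • ∫ x in Ioi (b * (c - μ)), Real.exp (-x ^ 2)) := by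
        rw [integral_comp_mul_left_Ioi (fun x => Real.exp (-x ^ 2)) _ hbpos]
    _ = (1 - erf ((c - μ) / (Real.sqrt 2 * σ))) / 2 := by
        rw [aux_integral_Ioi_exp_neg_sq, smul_eq_mul]
        rw [show b * (c - μ) = (c - μ) / (Real.sqrt 2 * σ) by
          rw [hb]; field_simp]
        rw [hb, show Real.sqrt (2 * π) = Real.sqrt 2 * Real.sqrt π from
          Real.sqrt_mul (by norm_num) π]
        have hπ : Real.sqrt π ≠ 0 := (Real.sqrt_pos.mpr Real.pi_pos).ne'
        have h2' : Real.sqrt 2 ≠ 0 := by positivity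
        field_simp

lemma aux_integrable_sub_mul_pdf (μ σ : ℝ) (hσ : 0 < σ) :
    Integrable (fun x : ℝ => (x - μ) * gaussianPDFReal μ ⟨σ ^ 2, sq_nonneg σ⟩ x) := by
  have hbpos : (0:ℝ) < (2 * σ ^ 2)⁻¹ := by positivity
  have h1 : Integrable (fun x : ℝ => x * Real.exp (-(2 * σ ^ 2)⁻¹ * x ^ 2)) :=
    integrable_mul_exp_neg_mul_sq hbpos
  have h2 := (h1.const_mul ((Real.sqrt (2 * π) * σ)⁻¹)).comp_sub_right μ
  refine h2.congr (Filter.Eventually.of_forall fun x => ?_)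
  dsimp only
  rw [aux_pdf_eq μ σ hσ]
  rw [show -(2 * σ ^ 2)⁻¹ * (x - μ) ^ 2 = -(x - μ) ^ 2 / (2 * σ ^ 2) by ring]
  ring

lemma aux_integrable_id_mul_pdf (μ σ : ℝ) (hσ : 0 < σ) :
    Integrable (fun x : ℝ => x * gaussianPDFReal μ ⟨σ ^ 2, sq_nonneg σ⟩ x) := by
  have h := (aux_integrable_sub_mul_pdf μ σ hσ).add
    ((integrable_gaussianPDFReal μ ⟨σ ^ 2, sq_nonneg σ⟩).const_mul μ)
  refine h.congr (Filter.Eventually.of_forall fun x => ?_)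
  simp only [Pi.add_apply]
  ring

lemma aux_gauss_mean_tail (μ σ : ℝ) (hσ : 0 < σ) (c : ℝ) :
    ∫ x in Ioi c, (x - μ) * gaussianPDFReal μ ⟨σ ^ 2, sq_nonneg σ⟩ x
      = σ / Real.sqrt (2 * π) * Real.exp (-(c - μ) ^ 2 / (2 * σ ^ 2)) := by
  set K := (Real.sqrt (2 * π) * σ)⁻¹ with hK
  have hKpos : 0 < K := by rw [hK]; positivity
  set F : ℝ → ℝ := fun x => -(σ ^ 2) * K * Real.exp (-(x - μ) ^ 2 / (2 * σ ^ 2)) with hF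
  have hderiv : ∀ x : ℝ,
      HasDerivAt F ((x - μ) * gaussianPDFReal μ ⟨σ ^ 2, sq_nonneg σ⟩ x) x := by
    intro x
    have h0 : HasDerivAt (fun x : ℝ => x - μ) 1 x := (hasDerivAt_id x).sub_const μ
    have hp : HasDerivAt (fun x : ℝ => (x - μ) ^ 2) (2 * (x - μ)) x := by
      have := h0.fun_pow 2
      simpa using this
    have h1 : HasDerivAt (fun x : ℝ => -(x - μ) ^ 2 / (2 * σ ^ 2))
        (-(x - μ) / σ ^ 2) x := by
      have := (hp.neg).div_const (2 * σ ^ 2)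
      refine this.congr_deriv ?_
      field_simp
    have hexp := h1.exp
    have := hexp.const_mul (-(σ ^ 2) * K)
    refine this.congr_deriv ?_
    rw [aux_pdf_eq μ σ hσ, ← hK]
    field_simp
  have hint : IntegrableOn
      (fun x : ℝ => (x - μ) * gaussianPDFReal μ ⟨σ ^ 2, sq_nonneg σ⟩ x) (Ioi c) :=
    (aux_integrable_sub_mul_pdf μ σ hσ).integrableOn
  have htend : Tendsto F atTop (𝓝 0) := by
    have h1 : Tendsto (fun x : ℝ => -(x - μ) ^ 2 / (2 * σ ^ 2)) atTop atBot := by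
      apply Tendsto.atBot_div_const (by positivity)
      apply tendsto_neg_atBot_iff.mpr
      have h : Tendsto (fun x : ℝ => x - μ) atTop atTop :=
        tendsto_atTop_add_const_right _ _ tendsto_id
      exact (tendsto_pow_atTop two_ne_zero).comp h
    have h2 : Tendsto (fun x : ℝ => Real.exp (-(x - μ) ^ 2 / (2 * σ ^ 2))) atTop (𝓝 0) :=
      Real.tendsto_exp_atBot.comp h1
    have := h2.const_mul (-(σ ^ 2) * K)
    simpa [hF] using this
  have := integral_Ioi_of_hasDerivAt_of_tendsto' (a := c) (fun x _ => hderiv x) hint htend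
  rw [this, hF]
  have hσπ : Real.sqrt (2 * π) ≠ 0 := by positivity
  rw [hK]
  field_simp
  ring


lemma aux_gauss_first_moment_tail (μ σ : ℝ) (hσ : 0 < σ) (c : ℝ) :
    ∫ x in Ioi c, x * gaussianPDFReal μ ⟨σ ^ 2, sq_nonneg σ⟩ x
      = μ * ((1 - erf ((c - μ) / (Real.sqrt 2 * σ))) / 2)
        + σ / Real.sqrt (2 * π) * Real.exp (-(c - μ) ^ 2 / (2 * σ ^ 2)) := by
  have h1 : ∫ x in Ioi c, x * gaussianPDFReal μ ⟨σ ^ 2, sq_nonneg σ⟩ x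
      = ∫ x in Ioi c, ((x - μ) * gaussianPDFReal μ ⟨σ ^ 2, sq_nonneg σ⟩ x
          + μ * gaussianPDFReal μ ⟨σ ^ 2, sq_nonneg σ⟩ x) := by
    refine setIntegral_congr_fun measurableSet_Ioi fun x _ => ?_
    ring
  rw [h1, integral_add (aux_integrable_sub_mul_pdf μ σ hσ).integrableOn
      (((integrable_gaussianPDFReal μ ⟨σ ^ 2, sq_nonneg σ⟩).const_mul μ).integrableOn),
    aux_gauss_mean_tail μ σ hσ c, integral_const_mul, aux_gauss_tail μ σ hσ c]
  ring

lemma aux_setIntegral_gaussianReal (μ : ℝ) (v : ℝ≥0) (hv : v ≠ 0) {s : Set ℝ}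
    (hs : MeasurableSet s) (g : ℝ → ℝ) :
    ∫ y in s, g y ∂(gaussianReal μ v) = ∫ y in s, gaussianPDFReal μ v y * g y := by
  rw [gaussianReal_of_var_ne_zero _ hv, gaussianPDF_def]
  rw [show (fun x => ENNReal.ofReal (gaussianPDFReal μ v x))
      = (fun x => ((gaussianPDFReal μ v x).toNNReal : ℝ≥0∞)) from rfl]
  rw [restrict_withDensity hs, integral_withDensity_eq_integral_smul
    ((measurable_gaussianPDFReal μ v).real_toNNReal) g]
  refine integral_congr_ae (Filter.Eventually.of_forall fun x => ?_)
  simp [NNReal.smul_def, Real.coe_toNNReal _ (gaussianPDFReal_nonneg μ v x)]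

end aux

theorem folded_normal_conditional_tail_expectation
    (μt σt ε γ : ℝ) (hσ : 0 < σt) (hε : ε ∈ Ioo (0:ℝ) 1)
    (hγ : erf ((γ - μt) / (Real.sqrt 2 * σt)) + erf ((γ + μt) / (Real.sqrt 2 * σt))
        = 2 * (1 - ε))
    (ν : Measure ℝ) (hν : ν = gaussianReal μt ⟨σt ^ 2, sq_nonneg σt⟩) :
    (∫ y in {y : ℝ | γ < |y|}, |y| ∂ν) =
        (μt / 2) * (erf ((γ + μt) / (Real.sqrt 2 * σt)) - erf ((γ - μt) / (Real.sqrt 2 * σt)))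
          + (σt / Real.sqrt (2 * π)) *
            (Real.exp (-(γ + μt) ^ 2 / (2 * σt ^ 2)) + Real.exp (-(γ - μt) ^ 2 / (2 * σt ^ 2))) ∧
      (∫ y in {y : ℝ | γ < |y|}, |y| ∂ν) / (ν {y : ℝ | γ < |y|}).toReal =
        ((μt / 2) * (erf ((γ + μt) / (Real.sqrt 2 * σt)) - erf ((γ - μt) / (Real.sqrt 2 * σt)))
          + (σt / Real.sqrt (2 * π)) *
            (Real.exp (-(γ + μt) ^ 2 / (2 * σt ^ 2)) + Real.exp (-(γ - μt) ^ 2 / (2 * σt ^ 2)))) / ε := by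
  obtain ⟨hε0, hε1⟩ := hε
  have hv0 : (⟨σt ^ 2, sq_nonneg σt⟩ : ℝ≥0) ≠ 0 := by
    intro h
    have := congrArg (fun x : ℝ≥0 => (x : ℝ)) h
    change σt ^ 2 = ((0 : ℝ≥0) : ℝ) at this
    simp only [NNReal.coe_zero] at this
    exact (pow_ne_zero 2 hσ.ne') this
  -- γ is positive
  have ha : (0:ℝ) < Real.sqrt 2 * σt := by positivity
  have hγpos : 0 < γ := by
    by_contra h
    push_neg at h
    have h1 : (γ - μt) / (Real.sqrt 2 * σt) ≤ (-(γ + μt)) / (Real.sqrt 2 * σt) := by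
      gcongr
      linarith
    have h2 := aux_erf_mono h1
    rw [show (-(γ + μt)) / (Real.sqrt 2 * σt) = -((γ + μt) / (Real.sqrt 2 * σt)) by ring,
      aux_erf_neg] at h2
    linarith
  have hsets : {y : ℝ | γ < |y|} = Iio (-γ) ∪ Ioi γ := by
    ext y
    simp only [mem_setOf_eq, mem_union, mem_Iio, mem_Ioi, lt_abs]
    constructor
    · rintro (h | h)
      · exact Or.inr h
      · exact Or.inl (by linarith)
    · rintro (h | h)
      · exact Or.inr (by linarith)
      · exact Or.inl h
  have hms : MeasurableSet (Iio (-γ) ∪ Ioi γ : Set ℝ) :=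
    measurableSet_Iio.union measurableSet_Ioi
  have hdisj : Disjoint (Iio (-γ)) (Ioi γ) := by
    rw [Set.disjoint_left]
    intro y hy hy'
    simp only [mem_Iio] at hy
    simp only [mem_Ioi] at hy'
    linarith
  set A := erf ((γ - μt) / (Real.sqrt 2 * σt)) with hA
  set B := erf ((γ + μt) / (Real.sqrt 2 * σt)) with hB
  have habs : Integrable (fun y : ℝ => gaussianPDFReal μt ⟨σt ^ 2, sq_nonneg σt⟩ y * |y|) := by
    have h := (aux_integrable_id_mul_pdf μt σt hσ).abs
    refine h.congr (Filter.Eventually.of_forall fun x => ?_)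
    simp only [Pi.abs_apply]
    rw [abs_mul, abs_of_nonneg (gaussianPDFReal_nonneg μt ⟨σt ^ 2, sq_nonneg σt⟩ x)]
    ring
  have hIoi : ∫ y in Ioi γ, gaussianPDFReal μt ⟨σt ^ 2, sq_nonneg σt⟩ y * |y|
      = μt * ((1 - A) / 2)
        + σt / Real.sqrt (2 * π) * Real.exp (-(γ - μt) ^ 2 / (2 * σt ^ 2)) := by
    rw [show (∫ y in Ioi γ, gaussianPDFReal μt ⟨σt ^ 2, sq_nonneg σt⟩ y * |y|)
        = ∫ y in Ioi γ, y * gaussianPDFReal μt ⟨σt ^ 2, sq_nonneg σt⟩ y from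
      setIntegral_congr_fun measurableSet_Ioi fun y hy => by
        rw [abs_of_pos (lt_trans hγpos hy)]; ring]
    exact aux_gauss_first_moment_tail μt σt hσ γ
  have hneg : ∀ f : ℝ → ℝ, ∫ y in Iio (-γ), f y = ∫ x in Ioi γ, f (-x) := by
    intro f
    rw [← integral_Iic_eq_integral_Iio, ← integral_comp_neg_Ioi]
  have hIio : ∫ y in Iio (-γ), gaussianPDFReal μt ⟨σt ^ 2, sq_nonneg σt⟩ y * |y|
      = -μt * ((1 - B) / 2)
        + σt / Real.sqrt (2 * π) * Real.exp (-(γ + μt) ^ 2 / (2 * σt ^ 2)) := by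
    rw [hneg]
    have hcong : ∀ x ∈ Ioi γ, gaussianPDFReal μt ⟨σt ^ 2, sq_nonneg σt⟩ (-x) * |(-x)|
        = x * gaussianPDFReal (-μt) ⟨σt ^ 2, sq_nonneg σt⟩ x := by
      intro x hx
      rw [aux_pdf_neg μt ⟨σt ^ 2, sq_nonneg σt⟩ x, abs_neg, abs_of_pos (lt_trans hγpos hx)]; ring
    rw [setIntegral_congr_fun measurableSet_Ioi hcong]
    have h := aux_gauss_first_moment_tail (-μt) σt hσ γ
    rw [show γ - -μt = γ + μt by ring] at h
    rw [h, ← hB]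
  have hPIoi : ∫ y in Ioi γ, gaussianPDFReal μt ⟨σt ^ 2, sq_nonneg σt⟩ y = (1 - A) / 2 :=
    aux_gauss_tail μt σt hσ γ
  have hPIio : ∫ y in Iio (-γ), gaussianPDFReal μt ⟨σt ^ 2, sq_nonneg σt⟩ y = (1 - B) / 2 := by
    rw [hneg]
    rw [setIntegral_congr_fun measurableSet_Ioi
      (fun x _ => aux_pdf_neg μt ⟨σt ^ 2, sq_nonneg σt⟩ x)]
    have h := aux_gauss_tail (-μt) σt hσ γ
    rw [show γ - -μt = γ + μt by ring] at h
    rw [h, ← hB]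
  have hmain : (∫ y in {y : ℝ | γ < |y|}, |y| ∂ν) =
      (μt / 2) * (B - A)
        + (σt / Real.sqrt (2 * π)) *
          (Real.exp (-(γ + μt) ^ 2 / (2 * σt ^ 2))
            + Real.exp (-(γ - μt) ^ 2 / (2 * σt ^ 2))) := by
    rw [hν, hsets, aux_setIntegral_gaussianReal μt _ hv0 hms (fun y => |y|),
      setIntegral_union hdisj measurableSet_Ioi habs.integrableOn habs.integrableOn,
      hIio, hIoi]
    ring
  have hprob : (ν {y : ℝ | γ < |y|}).toReal = ε := by
    rw [hν, hsets, gaussianReal_apply_eq_integral _ hv0 _,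
      setIntegral_union hdisj measurableSet_Ioi
        (integrable_gaussianPDFReal μt ⟨σt ^ 2, sq_nonneg σt⟩).integrableOn
        (integrable_gaussianPDFReal μt ⟨σt ^ 2, sq_nonneg σt⟩).integrableOn,
      hPIio, hPIoi,
      show (1 - B) / 2 + (1 - A) / 2 = ε by linarith]
    exact ENNReal.toReal_ofReal hε0.le
  exact ⟨hmain, by rw [hmain, hprob]⟩
end

section
/- For the complete graph conditional statistics: if the steady-state covariance matrix has σᵢᵢ = a(n−1)/n and σᵢⱼ = −a/n for i ≠ j (a > 0), and m < n agents are observed at values y_f ∈ ℝ^m, then the conditional mean of any unobserved coordinate is μ̃ = −(1ᵀ_m y_f)/(n−m) and the conditional variance is σ̃² = a·((n−1)/n)·(1 − m/((n−1)(n−m))). -/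
open Matrix Finset

/-- Conditional statistics in the complete-graph consensus network: with steady-state
covariance `Σᵢᵢ = a(n−1)/n`, `Σᵢⱼ = −a/n` (`i ≠ j`), observing `m < n` agents at `y_f`
yields conditional mean `−(1ᵀy_f)/(n−m)` and conditional variance
`a((n−1)/n)(1 − m/((n−1)(n−m)))` for any unobserved agent. -/
theorem complete_graph_conditional_statistics
    (n m : ℕ) (hm : 1 ≤ m) (hmn : m < n) (a : ℝ) (ha : 0 < a)
    (S22 : Matrix (Fin m) (Fin m) ℝ)
    (hS22 : S22 = Matrix.of fun i j =>
      if i = j then a * ((n : ℝ) - 1) / n else -a / n)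
    (w : Fin m → ℝ) (hw : w = fun _ => -a / n)
    (yf : Fin m → ℝ) :
    w ⬝ᵥ (S22⁻¹ *ᵥ yf) = -(∑ i, yf i) / ((n : ℝ) - m) ∧
      a * ((n : ℝ) - 1) / n - w ⬝ᵥ (S22⁻¹ *ᵥ w) =
        a * (((n : ℝ) - 1) / n) * (1 - (m : ℝ) / (((n : ℝ) - 1) * ((n : ℝ) - m))) := by
  have hmn' : (m:ℝ) < (n:ℝ) := by exact_mod_cast hmn
  have hm' : (1:ℝ) ≤ (m:ℝ) := by exact_mod_cast hm
  have hN0 : (n:ℝ) ≠ 0 := by linarith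
  have hNm : (n:ℝ) - (m:ℝ) ≠ 0 := by linarith
  have hN1' : (n:ℝ) - 1 ≠ 0 := by linarith
  have ha' : a ≠ 0 := ne_of_gt ha
  set c : ℝ := 1 / (a * ((n:ℝ) - (m:ℝ))) with hc
  set B : Matrix (Fin m) (Fin m) ℝ :=
    Matrix.of (fun i j => (if i = j then 1/a else 0) + c) with hB
  have hBS : S22 * B = 1 := by
    ext i j
    rw [Matrix.mul_apply]
    have key : ∀ k : Fin m, S22 i k * B k j =
        (-a/(n:ℝ)) * c + (if k = j then (-a/(n:ℝ)) * (1/a) else 0) +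
          (if k = i then a * c else 0) +
          (if k = i then (if i = j then (1:ℝ) else 0) else 0) := by
      intro k
      by_cases hki : k = i
      · subst hki
        by_cases hkj : k = j
        · subst hkj
          simp only [hS22, hB, Matrix.of_apply, if_pos rfl, hc, eq_self_iff_true, if_true]
          field_simp
          ring
        · simp only [hS22, hB, Matrix.of_apply, if_pos rfl, if_neg hkj, hc, eq_self_iff_true, if_true]
          field_simp
          ring
      · have hik : ¬ i = k := fun h => hki h.symm
        by_cases hkj : k = j
        · subst hkj
          have hij : ¬ i = k := hik
          simp only [hS22, hB, Matrix.of_apply, if_neg hik, if_neg hki, if_pos rfl,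
            if_neg hij, hc, eq_self_iff_true, if_true]
          field_simp
          ring
        · simp only [hS22, hB, Matrix.of_apply, if_neg hik, if_neg hki, if_neg hkj, hc]
          first
            | rfl
            | ring
            | (field_simp; try ring)
    rw [Finset.sum_congr rfl (fun k _ => key k)]
    simp only [Finset.sum_add_distrib, Finset.sum_const, Finset.sum_ite_eq',
      Finset.mem_univ, if_true, Finset.card_univ, Fintype.card_fin, nsmul_eq_mul]
    rw [Matrix.one_apply, hc]
    by_cases hij : i = j <;> simp only [hij, if_pos rfl, if_neg, if_true] <;>
      first
        | (field_simp; ring)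
        | (simp [hij]; field_simp; ring)
  have hSinv : S22⁻¹ = B := Matrix.inv_eq_right_inv hBS
  have hkey : ∀ v : Fin m → ℝ,
      w ⬝ᵥ (S22⁻¹ *ᵥ v) = (-a/(n:ℝ)) * (1/a + (m:ℝ) * c) * (∑ i, v i) := by
    intro v
    rw [hSinv]
    have hrow : ∀ i : Fin m, (B *ᵥ v) i = (1/a) * v i + c * (∑ k, v k) := by
      intro i
      simp only [Matrix.mulVec, dotProduct, hB, Matrix.of_apply, add_mul,
        Finset.sum_add_distrib, ite_mul, zero_mul, Finset.sum_ite_eq, Finset.sum_ite_eq',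
        Finset.mem_univ, if_true, Finset.mul_sum]
    simp only [dotProduct, hw]
    rw [Finset.sum_congr rfl (fun i _ => by rw [hrow i])]
    simp only [mul_add, Finset.sum_add_distrib, Finset.sum_const, Finset.card_univ,
      Fintype.card_fin, nsmul_eq_mul, ← Finset.mul_sum]
    ring
  constructor
  · rw [hkey yf, hc]
    field_simp
    ring
  · rw [hkey w]
    have hsw : (∑ i, w i) = (m:ℝ) * (-a/(n:ℝ)) := by
      simp [hw, Finset.sum_const, Finset.card_univ, mul_comm]
    rw [hsw, hc]
    field_simp
    ring
end
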